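/- Under the standing parameter assumptions with Q < L, regard the minimum steady-state MSD D^min_∞(G) = μP_vL/Δ_L + (β_3(G)/2)(√(β_1(G)² − β_2(G)²) − β_1(G)) as a function of the attracting strength G, where β_0, β_1, β_2, β_3 depend on G through their definitions. Then D^min_∞ is monotone increasing in G: for all 0 ≤ G ≤ G', D^min_∞(G) ≤ D^min_∞(G'). (Corollary 2, monotonicity in the attracting strength G(s).) -/

import Mathlib

/-- Nonnegativity of the quadratic `t² + 2tc + w²` for `t ≥ 0`, `-w ≤ c`, `0 ≤ w`. -/
lemma quad_nonneg (c w t : ℝ) (hw : 0 ≤ w) (hc : -w ≤ c) (ht : 0 ≤ t) :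
    0 ≤ t ^ 2 + 2 * t * c + w ^ 2 := by
  nlinarith [sq_nonneg (t - w), mul_nonneg ht (by linarith : (0:ℝ) ≤ c + w)]

/-- Monotonicity of `t ↦ √(t² + 2tc + w²) + t` on `t ≥ 0`. -/
lemma sqrt_quad_mono (c w t t' : ℝ) (hw : 0 ≤ w) (hc : -w ≤ c) (ht : 0 ≤ t)
    (htt' : t ≤ t') :
    Real.sqrt (t ^ 2 + 2 * t * c + w ^ 2) ≤
      Real.sqrt (t' ^ 2 + 2 * t' * c + w ^ 2) + (t' - t) := by
  have ht' : 0 ≤ t' := le_trans ht htt'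
  have hq' : 0 ≤ t' ^ 2 + 2 * t' * c + w ^ 2 := quad_nonneg c w t' hw hc ht'
  set s := Real.sqrt (t' ^ 2 + 2 * t' * c + w ^ 2) with hs
  have hs0 : 0 ≤ s := Real.sqrt_nonneg _
  have hss : s ^ 2 = t' ^ 2 + 2 * t' * c + w ^ 2 := Real.sq_sqrt hq'
  have hkey : 0 ≤ s + t' + c := by
    rcases le_or_gt 0 (t' + c) with h | h
    · linarith
    · have hc0 : c < 0 := by linarith
      have h1 : (t' + c) ^ 2 ≤ t' ^ 2 + 2 * t' * c + w ^ 2 := by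
        nlinarith [mul_nonneg (by linarith : (0:ℝ) ≤ w - c) (by linarith : (0:ℝ) ≤ w + c)]
      have h2 : -(t' + c) ≤ s := by
        have := Real.sqrt_le_sqrt h1
        rwa [Real.sqrt_sq_eq_abs, abs_of_neg h, ← hs] at this
      linarith
  have hX0 : 0 ≤ s + (t' - t) := by linarith
  have hle : t ^ 2 + 2 * t * c + w ^ 2 ≤ (s + (t' - t)) ^ 2 := by
    nlinarith [mul_nonneg (by linarith : (0:ℝ) ≤ t' - t) hkey]
  calc Real.sqrt (t ^ 2 + 2 * t * c + w ^ 2) ≤ Real.sqrt ((s + (t' - t)) ^ 2) :=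
        Real.sqrt_le_sqrt hle
    _ = s + (t' - t) := by rw [Real.sqrt_sq hX0]

/-- Abstract form of the monotonicity argument. -/
lemma key_mono (a b d e f w C3 cst : ℝ) (β0 β1 β2 β3 Dmin : ℝ → ℝ)
    (ha : 0 < a) (hb : 0 < b) (hd : 0 ≤ d) (hC3 : 0 ≤ C3) (hw : 0 ≤ w)
    (hbdf : b ^ 2 - d * f = w ^ 2)
    (hde : d * e ≤ 2 * a * b + 2 * a * w)
    (hβ1 : ∀ G, β1 G = a * G + b)
    (hβ0 : ∀ G, β0 G = e * G + f)
    (hβ2sq : ∀ G, 0 ≤ G → (β2 G) ^ 2 = d * β0 G)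
    (hβ3 : ∀ G, 0 ≤ G → β3 G * β0 G = C3)
    (hDmin : ∀ G, Dmin G = cst + (β3 G / 2) * (Real.sqrt ((β1 G) ^ 2 - (β2 G) ^ 2) - β1 G)) :
    ∀ G G', 0 ≤ G → G ≤ G' → Dmin G ≤ Dmin G' := by
  intro G G' hG hGG'
  have hG' : 0 ≤ G' := le_trans hG hGG'
  set c0 : ℝ := b - d * e / (2 * a) with hc0def
  have hc0' : 2 * a * c0 = 2 * a * b - d * e := by
    rw [hc0def]; field_simp
  have hc0 : -w ≤ c0 := by nlinarith
  -- rewrite the discriminant in normal quadratic form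
  have hqform : ∀ X : ℝ, 0 ≤ X →
      (β1 X) ^ 2 - (β2 X) ^ 2 = (a * X) ^ 2 + 2 * (a * X) * c0 + w ^ 2 := by
    intro X hX
    rw [hβ1, hβ2sq X hX, hβ0]
    linear_combination hbdf - X * hc0'
  have hqnonneg : ∀ X : ℝ, 0 ≤ X → 0 ≤ (β1 X) ^ 2 - (β2 X) ^ 2 := by
    intro X hX
    rw [hqform X hX]
    exact quad_nonneg c0 w (a * X) hw hc0 (mul_nonneg ha.le hX)
  -- positivity of denominators
  have hhpos : ∀ X : ℝ, 0 ≤ X → 0 < Real.sqrt ((β1 X) ^ 2 - (β2 X) ^ 2) + β1 X := by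
    intro X hX
    have : 0 < β1 X := by rw [hβ1]; positivity
    have := Real.sqrt_nonneg ((β1 X) ^ 2 - (β2 X) ^ 2)
    linarith
  -- closed form of Dmin
  have hform : ∀ X : ℝ, 0 ≤ X →
      Dmin X = cst - (C3 * d / 2) / (Real.sqrt ((β1 X) ^ 2 - (β2 X) ^ 2) + β1 X) := by
    intro X hX
    have hq := hqnonneg X hX
    have hs : (Real.sqrt ((β1 X) ^ 2 - (β2 X) ^ 2)) ^ 2 = (β1 X) ^ 2 - (β2 X) ^ 2 :=
      Real.sq_sqrt hq
    have hp := hhpos X hX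
    rw [hDmin]
    have hmain : (β3 X / 2) * (Real.sqrt ((β1 X) ^ 2 - (β2 X) ^ 2) - β1 X)
        = -(C3 * d / 2) / (Real.sqrt ((β1 X) ^ 2 - (β2 X) ^ 2) + β1 X) := by
      rw [eq_div_iff hp.ne']
      linear_combination (β3 X / 2) * hs - (β3 X / 2) * hβ2sq X hX - (d / 2) * hβ3 X hX
    rw [hmain]; ring
  -- monotonicity of the denominator
  have hmono : Real.sqrt ((β1 G) ^ 2 - (β2 G) ^ 2) + β1 G ≤
      Real.sqrt ((β1 G') ^ 2 - (β2 G') ^ 2) + β1 G' := by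
    rw [hqform G hG, hqform G' hG', hβ1, hβ1]
    have := sqrt_quad_mono c0 w (a * G) (a * G') hw hc0 (mul_nonneg ha.le hG)
      (by nlinarith)
    linarith
  rw [hform G hG, hform G' hG']
  have h1 := hhpos G hG
  have h2 := hhpos G' hG'
  have : (C3 * d / 2) / (Real.sqrt ((β1 G') ^ 2 - (β2 G') ^ 2) + β1 G')
      ≤ (C3 * d / 2) / (Real.sqrt ((β1 G) ^ 2 - (β2 G) ^ 2) + β1 G) := by
    gcongr
  linarith


set_option maxHeartbeats 1600000 in

/-- Corollary 2 (monotonicity in the attracting strength `G(s)`): for `Q < L`,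
the minimum steady-state MSD
`D^min_∞(G) = μP_vL/Δ_L + (β₃(G)/2)(√(β₁(G)² − β₂(G)²) − β₁(G))`
is monotone increasing in `G ≥ 0`. -/
theorem l0LMS_min_MSD_monotone_in_G
    (L Q μ Px Pv α : ℝ)
    (hL : 1 ≤ L) (hQ0 : 0 ≤ Q) (hQL : Q < L)
    (hμ : 0 < μ) (hPx : 0 < Px) (hPv : 0 < Pv) (hα : 0 < α)
    (hstab : (L + 2) * μ * Px < 2)
    (ΔL ΔQ Δ0 Δ0' : ℝ)
    (hΔL : ΔL = 2 - (L + 2) * μ * Px)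
    (hΔQ : ΔQ = 2 - (Q + 2) * μ * Px)
    (hΔ0 : Δ0 = 1 - μ * Px)
    (hΔ0' : Δ0' = 2 - μ * Px)
    (β0 β1 β2 β3 Dmin : ℝ → ℝ)
    (hβ0 : ∀ G : ℝ, β0 G = μ * Px * Δ0' * ΔL * G
        + 4 * α ^ 2 * ΔQ * (μ * Px * ΔL + Δ0 * ΔQ / Real.pi))
    (hβ1 : ∀ G : ℝ, β1 G = (Δ0' * G
        + 4 * (L - Q) * α ^ 2 * (μ * Px + 2 * Δ0 * ΔQ / (Real.pi * ΔL)))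
        / (μ ^ 2 * Px ^ 2 * ΔL))
    (hβ2 : ∀ G : ℝ, β2 G = (4 * α * (L - Q) / (μ ^ 2 * Px ^ 2 * ΔL ^ 2))
        * Real.sqrt (Δ0 * β0 G / Real.pi))
    (hβ3 : ∀ G : ℝ, β3 G = 2 * μ ^ 3 * Px ^ 2 * Pv * Δ0 * ΔL / β0 G)
    (hDmin : ∀ G : ℝ, Dmin G = μ * Pv * L / ΔL
        + (β3 G / 2) * (Real.sqrt ((β1 G) ^ 2 - (β2 G) ^ 2) - β1 G)) :
    ∀ G G' : ℝ, 0 ≤ G → G ≤ G' → Dmin G ≤ Dmin G' := by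
  have hπ := Real.pi_pos
  have hmp : 0 < μ * Px := mul_pos hμ hPx
  have hn : 0 < L - Q := by linarith
  have hΔLpos : 0 < ΔL := by rw [hΔL]; nlinarith
  have hΔQpos : 0 < ΔQ := by rw [hΔQ]; nlinarith
  have hΔ0pos : 0 < Δ0 := by rw [hΔ0]; nlinarith
  have hΔ0'pos : 0 < Δ0' := by rw [hΔ0']; nlinarith
  -- abstract coefficients
  set a : ℝ := Δ0' / (μ ^ 2 * Px ^ 2 * ΔL) with ha_def
  set b : ℝ := 4 * (L - Q) * α ^ 2 * (μ * Px + 2 * Δ0 * ΔQ / (Real.pi * ΔL))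
      / (μ ^ 2 * Px ^ 2 * ΔL) with hb_def
  set e : ℝ := μ * Px * Δ0' * ΔL with he_def
  set f : ℝ := 4 * α ^ 2 * ΔQ * (μ * Px * ΔL + Δ0 * ΔQ / Real.pi) with hf_def
  set d : ℝ := (4 * α * (L - Q) / (μ ^ 2 * Px ^ 2 * ΔL ^ 2)) ^ 2 * Δ0 / Real.pi with hd_def
  set w : ℝ := 4 * (L - Q) * α ^ 2 / (μ * Px * ΔL) with hw_def
  set C3 : ℝ := 2 * μ ^ 3 * Px ^ 2 * Pv * Δ0 * ΔL with hC3_def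
  have ha : 0 < a := by rw [ha_def]; positivity
  have hb : 0 < b := by rw [hb_def]; positivity
  have hd : 0 ≤ d := by rw [hd_def]; positivity
  have hC3 : 0 ≤ C3 := by rw [hC3_def]; positivity
  have hw : 0 ≤ w := by rw [hw_def]; positivity
  have hβ1' : ∀ G : ℝ, β1 G = a * G + b := by
    intro G; rw [hβ1, ha_def, hb_def]; ring
  have hβ0' : ∀ G : ℝ, β0 G = e * G + f := by
    intro G; rw [hβ0, he_def, hf_def]
  have hβ0pos : ∀ G : ℝ, 0 ≤ G → 0 < β0 G := by
    intro G hG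
    rw [hβ0']
    have he : 0 < e := by rw [he_def]; positivity
    have hf : 0 < f := by rw [hf_def]; positivity
    nlinarith
  have hβ2sq : ∀ G : ℝ, 0 ≤ G → (β2 G) ^ 2 = d * β0 G := by
    intro G hG
    have h0 : 0 ≤ Δ0 * β0 G / Real.pi := by
      have := hβ0pos G hG; positivity
    rw [hβ2, mul_pow, Real.sq_sqrt h0, hd_def]
    ring
  have hβ3' : ∀ G : ℝ, 0 ≤ G → β3 G * β0 G = C3 := by
    intro G hG
    rw [hβ3, hC3_def, div_mul_cancel₀]
    exact (hβ0pos G hG).ne'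
  have hbdf : b ^ 2 - d * f = w ^ 2 := by
    rw [hb_def, hd_def, hf_def, hw_def]
    field_simp
    ring
  have hde : d * e ≤ 2 * a * b + 2 * a * w := by
    have hsub : ΔQ = ΔL + (L - Q) * (μ * Px) := by rw [hΔQ, hΔL]; ring
    have hid : 2 * a * b + 2 * a * w - d * e
        = 8 * (L - Q) * α ^ 2 * Δ0' / (μ ^ 3 * Px ^ 3 * ΔL ^ 2)
          * (2 + 2 * Δ0 / (Real.pi * (μ * Px))) := by
      rw [ha_def, hb_def, hd_def, he_def, hw_def, hsub]
      field_simp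
      ring
    have hpos : 0 ≤ 8 * (L - Q) * α ^ 2 * Δ0' / (μ ^ 3 * Px ^ 3 * ΔL ^ 2)
          * (2 + 2 * Δ0 / (Real.pi * (μ * Px))) := by positivity
    linarith
  exact key_mono a b d e f w C3 (μ * Pv * L / ΔL) β0 β1 β2 β3 Dmin
    ha hb hd hC3 hw hbdf hde hβ1' hβ0' hβ2sq hβ3' hDmin
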